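/- Let j be a positive integer with p² ∤ j, let v ≥ 0 be an integer, and set D = p^{2v}·j. Then for every integer n ≥ v, T_n(g_D) = Σ_{t=0}^{n−v} (j/p)^{n−v−t}·p^t·g_{p^{2t}·j} + Σ_{t=1}^{v} p^{n−v+t}·g_{p^{2n−2v+4t}·j}. -/

import Mathlib

set_option linter.unusedSectionVars false

section Aux
variable {M : Type*} [AddCommGroup M] [inst : Module ℤ M]

private lemma smul_congr_aux (G : ℕ → M) {a b : ℤ} {x y : ℕ} (h1 : a = b) (h2 : x = y) :
    a • G x = b • G y := by rw [h1, h2]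

private lemma sum_Icc_one (f : ℕ → M) (v : ℕ) :
    ∑ t ∈ Finset.Icc 1 v, f t = ∑ t ∈ Finset.range v, f (1 + t) := by
  rw [← Finset.Ico_add_one_right_eq_Icc, Finset.sum_Ico_eq_sum_range]; norm_num

private lemma lemR (G : ℕ → M) (T : M →ₗ[ℤ] M) (p : ℤ) (Tn : ℕ → M →ₗ[ℤ] M)
    (hTn0 : Tn 0 = LinearMap.id) (hTn1 : Tn 1 = T)
    (hrec : ∀ n, Tn (n + 2) = T ∘ₗ Tn (n + 1) - p • Tn n)
    (hB : ∀ m, T (G (m + 1)) = G m + p • G (m + 2)) :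
    ∀ n d, Tn n (G (n + d)) = ∑ t ∈ Finset.range (n + 1), p ^ t • G (d + 2 * t) := by
  obtain rfl : inst = AddCommGroup.toIntModule M := AddCommGroup.uniqueIntModule.uniq inst
  intro n
  induction n using Nat.twoStepInduction with
  | zero => intro d; simp [hTn0]
  | one =>
      intro d
      have h := hB d
      rw [show (1 : ℕ) + d = d + 1 by omega] at *
      simp [hTn1, Finset.sum_range_succ, h, mul_comm]
  | more n ih1 ih2 =>
      intro d
      rw [hrec]
      simp only [LinearMap.sub_apply, LinearMap.comp_apply, LinearMap.smul_apply]
      have h2 : Tn (n + 1) (G (n + 2 + d)) =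
          ∑ t ∈ Finset.range (n + 2), p ^ t • G ((d + 1) + 2 * t) := by
        rw [show n + 2 + d = (n + 1) + (d + 1) by omega]; exact ih2 (d + 1)
      have h1 : Tn n (G (n + 2 + d)) =
          ∑ t ∈ Finset.range (n + 1), p ^ t • G ((d + 2) + 2 * t) := by
        rw [show n + 2 + d = n + (d + 2) by omega]; exact ih1 (d + 2)
      rw [h2, h1, map_sum]
      have hterm : ∀ t : ℕ, T (p ^ t • G ((d + 1) + 2 * t)) =
          p ^ t • G (d + 2 * t) + p ^ (t + 1) • G ((d + 2) + 2 * t) := by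
        intro t
        rw [T.map_smul, show (d + 1) + 2 * t = (d + 2 * t) + 1 by omega, hB (d + 2 * t),
          smul_add, smul_smul, ← pow_succ, show d + 2 * t + 2 = (d + 2) + 2 * t by omega]
      rw [Finset.sum_congr rfl fun t _ => hterm t, Finset.sum_add_distrib]
      have hsmul : ∀ t : ℕ, p • (p ^ t • G ((d + 2) + 2 * t)) =
          p ^ (t + 1) • G ((d + 2) + 2 * t) := by
        intro t; rw [smul_smul, ← pow_succ']
      rw [Finset.smul_sum, Finset.sum_congr rfl fun t _ => hsmul t]
      rw [Finset.sum_range_succ (fun t => p ^ (t + 1) • G ((d + 2) + 2 * t)) (n + 1)]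
      rw [Finset.sum_range_succ (fun t => p ^ t • G (d + 2 * t)) (n + 2)]
      rw [smul_congr_aux G (show (p:ℤ) ^ (n + 1 + 1) = p ^ (n + 2) from rfl)
        (show (d + 2) + 2 * (n + 1) = d + 2 * (n + 2) by omega)]
      abel

private lemma lemQ (G : ℕ → M) (T : M →ₗ[ℤ] M) (p χ : ℤ) (Tn : ℕ → M →ₗ[ℤ] M)
    (hTn0 : Tn 0 = LinearMap.id) (hTn1 : Tn 1 = T)
    (hrec : ∀ n, Tn (n + 2) = T ∘ₗ Tn (n + 1) - p • Tn n)
    (hA : T (G 0) = χ • G 0 + p • G 1)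
    (hB : ∀ m, T (G (m + 1)) = G m + p • G (m + 2)) :
    ∀ k v, Tn (v + k) (G v) =
      (∑ t ∈ Finset.range (k + 1), (χ ^ (k - t) * p ^ t) • G t)
      + ∑ t ∈ Finset.Icc 1 v, p ^ (k + t) • G (k + 2 * t) := by
  obtain rfl : inst = AddCommGroup.toIntModule M := AddCommGroup.uniqueIntModule.uniq inst
  intro k
  induction k using Nat.twoStepInduction with
  | zero =>
      intro v
      have h : Tn v (G v) = ∑ t ∈ Finset.range (v + 1), p ^ t • G (2 * t) := by
        simpa using lemR G T p Tn hTn0 hTn1 hrec hB v 0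
      rw [Nat.add_zero, h, Finset.sum_range_succ' (fun t => p ^ t • G (2 * t)) v]
      rw [sum_Icc_one (fun t => p ^ (0 + t) • G (0 + 2 * t)) v]
      rw [Finset.sum_congr rfl fun t (_ : t ∈ Finset.range v) =>
        smul_congr_aux G (show (p:ℤ) ^ (t + 1) = p ^ (0 + (1 + t)) by
          rw [show t + 1 = 0 + (1 + t) by omega]) (show 2 * (t + 1) = 0 + 2 * (1 + t) by omega)]
      simp [add_comm]
  | one =>
      intro v
      match v with
      | 0 =>
          rw [Nat.zero_add, hTn1, hA]
          simp [Finset.sum_range_succ]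
      | w + 1 =>
          rw [show w + 1 + 1 = w + 2 from rfl, hrec w]
          simp only [LinearMap.sub_apply, LinearMap.comp_apply, LinearMap.smul_apply]
          have h2 : Tn (w + 1) (G (w + 1)) =
              ∑ t ∈ Finset.range (w + 2), p ^ t • G (2 * t) := by
            simpa using lemR G T p Tn hTn0 hTn1 hrec hB (w + 1) 0
          have h1 : Tn w (G (w + 1)) =
              ∑ t ∈ Finset.range (w + 1), p ^ t • G (1 + 2 * t) := by
            simpa using lemR G T p Tn hTn0 hTn1 hrec hB w 1
          rw [h2, h1, Finset.sum_range_succ' (fun t => p ^ t • G (2 * t)) (w + 1),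
            map_add, map_sum]
          have hT0 : T (p ^ 0 • G (2 * 0)) = χ • G 0 + p • G 1 := by
            norm_num [hA]
          have hTt : ∀ t : ℕ, T (p ^ (t + 1) • G (2 * (t + 1))) =
              p ^ (t + 1) • G (1 + 2 * t) + p ^ (t + 2) • G (1 + 2 * (t + 1)) := by
            intro t
            rw [T.map_smul, show 2 * (t + 1) = (1 + 2 * t) + 1 by omega, hB (1 + 2 * t),
              smul_add, smul_smul, ← pow_succ]
            exact congrArg₂ (· + ·) rfl
              (smul_congr_aux G (by rw [show t + 1 + 1 = t + 2 by omega]) (by omega))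
          rw [Finset.sum_congr rfl fun t _ => hTt t, hT0, Finset.sum_add_distrib,
            Finset.smul_sum]
          rw [Finset.sum_congr rfl fun t (_ : t ∈ Finset.range (w + 1)) =>
            (show p • (p ^ t • G (1 + 2 * t)) = p ^ (t + 1) • G (1 + 2 * t) by
              rw [smul_smul, ← pow_succ'])]
          rw [sum_Icc_one (fun t => p ^ (1 + t) • G (1 + 2 * t)) (w + 1)]
          rw [Finset.sum_congr rfl fun t (_ : t ∈ Finset.range (w + 1)) =>
            smul_congr_aux G (show (p:ℤ) ^ (t + 2) = p ^ (1 + (1 + t)) by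
              rw [show t + 2 = 1 + (1 + t) by omega])
              (show 1 + 2 * (t + 1) = 1 + 2 * (1 + t) by omega)]
          rw [show (1 : ℕ) + 1 = 2 from rfl]
          simp only [Finset.sum_range_succ, Finset.sum_range_zero, Nat.sub_self, pow_zero,
            pow_one, Nat.sub_zero, one_mul, mul_one, zero_add]
          abel
  | more k ihk ihk1 =>
      intro v
      rw [show v + (k + 2) = (v + k) + 2 by omega, hrec (v + k)]
      simp only [LinearMap.sub_apply, LinearMap.comp_apply, LinearMap.smul_apply]
      have h2 := ihk1 v
      rw [show (v + k) + 1 = v + (k + 1) from rfl, h2, ihk v]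
      rw [Finset.sum_range_succ' (fun t => (χ ^ (k + 1 - t) * p ^ t) • G t) (k + 1),
        map_add, map_add, map_sum, map_sum]
      have hA' : T ((χ ^ (k + 1 - 0) * p ^ 0) • G 0) =
          χ ^ (k + 2) • G 0 + (χ ^ (k + 1) * p) • G 1 := by
        rw [T.map_smul, hA, smul_add, smul_smul, smul_smul]
        exact congrArg₂ (· + ·)
          (smul_congr_aux G (by simp [pow_succ]) rfl)
          (smul_congr_aux G (by simp) rfl)
      have hBt : ∀ t : ℕ, T ((χ ^ (k + 1 - (t + 1)) * p ^ (t + 1)) • G (t + 1)) =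
          (χ ^ (k - t) * p ^ (t + 1)) • G t + (χ ^ (k - t) * p ^ (t + 2)) • G (t + 2) := by
        intro t
        rw [T.map_smul, hB t, smul_add, smul_smul]
        exact congrArg₂ (· + ·)
          (smul_congr_aux G (by rw [show k + 1 - (t + 1) = k - t by omega]) rfl)
          (smul_congr_aux G (by rw [show k + 1 - (t + 1) = k - t by omega]; ring) rfl)
      have hB2 : ∀ t : ℕ, T (p ^ (k + 1 + t) • G (k + 1 + 2 * t)) =
          p ^ (k + 1 + t) • G (k + 2 * t) + p ^ (k + 2 + t) • G (k + 2 + 2 * t) := by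
        intro t
        rw [T.map_smul, show k + 1 + 2 * t = (k + 2 * t) + 1 by omega, hB (k + 2 * t),
          smul_add, smul_smul]
        exact congrArg₂ (· + ·) rfl
          (smul_congr_aux G (by ring) (by omega))
      rw [hA', Finset.sum_congr rfl fun t _ => hBt t, Finset.sum_congr rfl fun t _ => hB2 t,
        Finset.sum_add_distrib, Finset.sum_add_distrib, smul_add, Finset.smul_sum,
        Finset.smul_sum]
      rw [Finset.sum_congr rfl fun t (_ : t ∈ Finset.range (k + 1)) =>
        (show p • ((χ ^ (k - t) * p ^ t) • G t) = (χ ^ (k - t) * p ^ (t + 1)) • G t by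
          rw [smul_smul]; exact congrArg₂ (· • ·) (by ring) rfl)]
      rw [Finset.sum_congr rfl fun t (_ : t ∈ Finset.Icc 1 v) =>
        (show p • (p ^ (k + t) • G (k + 2 * t)) = p ^ (k + 1 + t) • G (k + 2 * t) by
          rw [smul_smul]; exact congrArg₂ (· • ·) (by ring) rfl)]
      rw [Finset.sum_range_succ' (fun t => (χ ^ (k + 2 - t) * p ^ t) • G t) (k + 2)]
      rw [Finset.sum_range_succ' (fun t => (χ ^ (k + 2 - (t + 1)) * p ^ (t + 1)) • G (t + 1))
        (k + 1)]
      rw [Finset.sum_congr rfl fun t (_ : t ∈ Finset.range (k + 1)) =>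
        smul_congr_aux G
          (show (χ : ℤ) ^ (k + 2 - (t + 1 + 1)) * p ^ (t + 1 + 1) = χ ^ (k - t) * p ^ (t + 2) by
            rw [show k + 2 - (t + 1 + 1) = k - t by omega, show t + 1 + 1 = t + 2 by omega])
          (show t + 1 + 1 = t + 2 by omega)]
      rw [smul_congr_aux G
        (show (χ : ℤ) ^ (k + 2 - (0 + 1)) * p ^ (0 + 1) = χ ^ (k + 1) * p by
          rw [show k + 2 - (0 + 1) = k + 1 by omega]; ring)
        (show (0 : ℕ) + 1 = 1 by omega)]
      rw [smul_congr_aux G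
        (show (χ : ℤ) ^ (k + 2 - 0) * p ^ 0 = χ ^ (k + 2) by
          rw [show k + 2 - 0 = k + 2 by omega]; ring) rfl]
      abel

end Aux

/-- Action of the Hecke operators `T(p^{2n})` on Zagier's weight 3/2 forms
`g_D`, for `D = p^{2v}·j` with `p² ∤ j` and `n ≥ v`. -/
theorem stmt_1 {p : ℕ} [Fact p.Prime] (hp : p ≠ 2)
    {M : Type*} [AddCommGroup M] [Module ℤ M]
    (g : ℕ → M) (T : M →ₗ[ℤ] M)
    (hT : ∀ D : ℕ, 0 < D →
      T (g D) = (if p ^ 2 ∣ D then g (D / p ^ 2) else 0)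
        + (legendreSym p (D : ℤ)) • g D + (p : ℤ) • g (p ^ 2 * D))
    (Tn : ℕ → M →ₗ[ℤ] M)
    (hTn0 : Tn 0 = LinearMap.id) (hTn1 : Tn 1 = T)
    (hTnrec : ∀ n : ℕ, Tn (n + 2) = T ∘ₗ Tn (n + 1) - (p : ℤ) • Tn n)
    (j v : ℕ) (hj : 0 < j) (hjp : ¬ p ^ 2 ∣ j)
    (D : ℕ) (hD : D = p ^ (2 * v) * j)
    (n : ℕ) (hn : v ≤ n) :
    Tn n (g D) =
      ∑ t ∈ Finset.range (n - v + 1),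
        ((legendreSym p (j : ℤ)) ^ (n - v - t) * (p : ℤ) ^ t) •
          g (p ^ (2 * t) * j)
      + ∑ t ∈ Finset.Icc 1 v,
          ((p : ℤ) ^ (n - v + t)) • g (p ^ (2 * (n - v) + 4 * t) * j) := by
  have hppos : 0 < p := (Fact.out : p.Prime).pos
  have hA : T (g (p ^ (2 * 0) * j)) =
      (legendreSym p (j : ℤ)) • g (p ^ (2 * 0) * j) + (p : ℤ) • g (p ^ (2 * 1) * j) := by
    have h := hT j hj
    rw [if_neg hjp, zero_add] at h
    rw [show p ^ (2 * 0) * j = j by simp, show p ^ (2 * 1) * j = p ^ 2 * j by norm_num]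
    exact h
  have hB : ∀ m : ℕ, T (g (p ^ (2 * (m + 1)) * j)) =
      g (p ^ (2 * m) * j) + (p : ℤ) • g (p ^ (2 * (m + 2)) * j) := by
    intro m
    have hpos : 0 < p ^ (2 * (m + 1)) * j :=
      Nat.mul_pos (pow_pos hppos _) hj
    have h := hT (p ^ (2 * (m + 1)) * j) hpos
    have hdvd : p ^ 2 ∣ p ^ (2 * (m + 1)) * j :=
      Dvd.dvd.mul_right (pow_dvd_pow p (by omega)) j
    rw [if_pos hdvd] at h
    have hdiv : p ^ (2 * (m + 1)) * j / p ^ 2 = p ^ (2 * m) * j := by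
      rw [show 2 * (m + 1) = 2 + 2 * m by omega, pow_add, mul_assoc,
        Nat.mul_div_cancel_left _ (pow_pos hppos 2)]
    have hleg : legendreSym p ((p ^ (2 * (m + 1)) * j : ℕ) : ℤ) = 0 := by
      rw [legendreSym.eq_zero_iff]
      have hd : (p : ℕ) ∣ p ^ (2 * (m + 1)) * j :=
        Dvd.dvd.mul_right (dvd_pow_self p (by omega)) j
      have := (ZMod.natCast_eq_zero_iff (p ^ (2 * (m + 1)) * j) p).mpr hd
      exact_mod_cast this
    rw [hdiv, hleg, zero_smul, add_zero,
      show p ^ 2 * (p ^ (2 * (m + 1)) * j) = p ^ (2 * (m + 2)) * j by ring] at h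
    exact h
  subst hD
  obtain ⟨k, rfl⟩ : ∃ k, n = v + k := ⟨n - v, by omega⟩
  have key := lemQ (fun m => g (p ^ (2 * m) * j)) T (p : ℤ) (legendreSym p (j : ℤ))
    Tn hTn0 hTn1 hTnrec hA hB k v
  rw [show v + k - v = k by omega, key]
  congr 1
  refine Finset.sum_congr rfl fun t _ => ?_
  exact smul_congr_aux g rfl (by rw [show 2 * (k + 2 * t) = 2 * k + 4 * t by ring])
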